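/- Let {(V_i, v_i)}_{i∈I} and {(W_i, w_i)}_{i∈I} be weighted families of closed subspaces of H. Suppose for each i, {f_{ij}}_{j∈J_i} is a frame for V_i with bounds A_i ≤ B_i, and {g_{ij}}_{j∈J_i} is a frame for W_i with bounds C_i ≤ D_i, where A = inf_i A_i > 0, B = sup_i B_i < ∞, C = inf_i C_i > 0, D = sup_i D_i < ∞. Then {(V_i, v_i)} and {(W_i, w_i)} are weaving fusion frames for H if and only if {v_i f_{ij}}_{i∈I, j∈J_i} and {w_i g_{ij}}_{i∈I, j∈J_i} are weaving frames for H. -/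

import Mathlib

open scoped RealInnerProductSpace

private lemma tsum_sandwich {ι : Type*} (a t : ι → ℝ) {E M : ℝ} (hE : 0 < E)
    (ha : ∀ i, 0 ≤ a i) (h1 : ∀ i, E * a i ≤ t i) (h2 : ∀ i, t i ≤ M * a i)
    (hs : Summable a) :
    E * ∑' i, a i ≤ ∑' i, t i ∧ ∑' i, t i ≤ M * ∑' i, a i := by
  have ht : Summable t :=
    Summable.of_nonneg_of_le (fun i => le_trans (mul_nonneg hE.le (ha i)) (h1 i)) h2
      (hs.mul_left M)
  constructor
  · rw [← tsum_mul_left]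
    exact Summable.tsum_le_tsum h1 (hs.mul_left E) ht
  · rw [← tsum_mul_left]
    exact Summable.tsum_le_tsum h2 ht (hs.mul_left M)

private lemma key_eq {H : Type*} [NormedAddCommGroup H] [InnerProductSpace ℝ H]
    (K : Submodule ℝ H) [CompleteSpace K] (c : ℝ) (f : H) {ι : Type*}
    (X : ι → H) (hX : ∀ j, X j ∈ K) :
    (∑' j, ⟪f, c • X j⟫ ^ 2)
      = c ^ 2 * ∑' j, ⟪(Submodule.orthogonalProjectionOnto K f : H), X j⟫ ^ 2 := by
  rw [← tsum_mul_left]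
  refine tsum_congr fun j => ?_
  have h0 : ⟪f - (Submodule.orthogonalProjectionOnto K f : H), X j⟫ = 0 :=
    K.starProjection_inner_eq_zero f (X j) (hX j)
  rw [inner_sub_left, sub_eq_zero] at h0
  rw [real_inner_smul_right, ← h0, mul_pow]

/-- If `{f i j}_{j ∈ J i}` is a frame for `V i` with bounds
`A_i, B_i` and `{g i j}_{j ∈ J i}` is a frame for `W i` with bounds `C_i, D_i`,
where `A = inf A_i > 0`, `B = sup B_i < ∞`, `C = inf C_i > 0`, `D = sup D_i < ∞`,
then `{(V i, v i)}` and `{(W i, w i)}` are weaving fusion frames for `H` iff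
`{v i • f i j}` and `{w i • g i j}` are weaving frames for `H`. -/
theorem stmt2 {H : Type*} [NormedAddCommGroup H] [InnerProductSpace ℝ H]
    [CompleteSpace H] {I : Type*} {J : I → Type*}
    (V W : I → Submodule ℝ H) [∀ i, CompleteSpace (V i)] [∀ i, CompleteSpace (W i)]
    (v w : I → ℝ) (hv : ∀ i, 0 < v i) (hw : ∀ i, 0 < w i)
    (F : ∀ i, J i → H) (G : ∀ i, J i → H)
    (hF : ∀ i j, F i j ∈ V i) (hG : ∀ i j, G i j ∈ W i)
    (Ai Bi Ci Di : I → ℝ)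
    (hframeF : ∀ i, ∀ g ∈ V i,
      Ai i * ‖g‖ ^ 2 ≤ ∑' j : J i, ⟪g, F i j⟫ ^ 2 ∧
        ∑' j : J i, ⟪g, F i j⟫ ^ 2 ≤ Bi i * ‖g‖ ^ 2)
    (hframeG : ∀ i, ∀ g ∈ W i,
      Ci i * ‖g‖ ^ 2 ≤ ∑' j : J i, ⟪g, G i j⟫ ^ 2 ∧
        ∑' j : J i, ⟪g, G i j⟫ ^ 2 ≤ Di i * ‖g‖ ^ 2)
    (A B C D : ℝ) (hA : 0 < A) (hC : 0 < C)
    (hAi : ∀ i, A ≤ Ai i) (hBi : ∀ i, Bi i ≤ B)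
    (hCi : ∀ i, C ≤ Ci i) (hDi : ∀ i, Di i ≤ D)
    (hAB : A ≤ B) (hCD : C ≤ D) :
    -- weaving fusion frames
    (∃ α β : ℝ, 0 < α ∧ α ≤ β ∧
      ∀ (σ : Set I) (f : H),
        α * ‖f‖ ^ 2 ≤
            (∑' i : σ, v i ^ 2 * ‖(Submodule.orthogonalProjectionOnto (V i) f : H)‖ ^ 2) +
              ∑' i : (σᶜ : Set I), w i ^ 2 * ‖(Submodule.orthogonalProjectionOnto (W i) f : H)‖ ^ 2 ∧
          (∑' i : σ, v i ^ 2 * ‖(Submodule.orthogonalProjectionOnto (V i) f : H)‖ ^ 2) +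
              (∑' i : (σᶜ : Set I), w i ^ 2 * ‖(Submodule.orthogonalProjectionOnto (W i) f : H)‖ ^ 2) ≤
            β * ‖f‖ ^ 2) ↔
    -- weaving frames
    (∃ α β : ℝ, 0 < α ∧ α ≤ β ∧
      ∀ (σ : Set I) (f : H),
        α * ‖f‖ ^ 2 ≤
            (∑' i : σ, ∑' j : J i.1, ⟪f, v i • F i j⟫ ^ 2) +
              ∑' i : (σᶜ : Set I), ∑' j : J i.1, ⟪f, w i • G i j⟫ ^ 2 ∧
          (∑' i : σ, ∑' j : J i.1, ⟪f, v i • F i j⟫ ^ 2) +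
              (∑' i : (σᶜ : Set I), ∑' j : J i.1, ⟪f, w i • G i j⟫ ^ 2) ≤
            β * ‖f‖ ^ 2) := by
  have hB : 0 < B := hA.trans_le hAB
  have hD : 0 < D := hC.trans_le hCD
  have hminpos : 0 < min A C := lt_min hA hC
  have hmaxpos : 0 < max B D := lt_of_lt_of_le hB (le_max_left B D)
  have hminmax : min A C ≤ max B D :=
    (min_le_left A C).trans (hAB.trans (le_max_left B D))
  -- pointwise sandwich on the V side
  have hlemV : ∀ (f : H) (i : I),
      A * (v i ^ 2 * ‖(Submodule.orthogonalProjectionOnto (V i) f : H)‖ ^ 2)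
        ≤ v i ^ 2 * ∑' j : J i, ⟪(Submodule.orthogonalProjectionOnto (V i) f : H), F i j⟫ ^ 2
      ∧ v i ^ 2 * ∑' j : J i, ⟪(Submodule.orthogonalProjectionOnto (V i) f : H), F i j⟫ ^ 2
        ≤ B * (v i ^ 2 * ‖(Submodule.orthogonalProjectionOnto (V i) f : H)‖ ^ 2) := by
    intro f i
    obtain ⟨h1, h2⟩ := hframeF i _ (Submodule.orthogonalProjectionOnto (V i) f).2
    have hv2 : (0:ℝ) ≤ v i ^ 2 := sq_nonneg _
    have hn : (0:ℝ) ≤ ‖(Submodule.orthogonalProjectionOnto (V i) f : H)‖ ^ 2 := sq_nonneg _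
    have e1 := mul_le_mul_of_nonneg_left h1 hv2
    have e2 := mul_le_mul_of_nonneg_left h2 hv2
    have e3 := mul_le_mul_of_nonneg_right (hAi i) (mul_nonneg hv2 hn)
    have e4 := mul_le_mul_of_nonneg_right (hBi i) (mul_nonneg hv2 hn)
    constructor <;> nlinarith [e1, e2, e3, e4]
  -- pointwise sandwich on the W side
  have hlemW : ∀ (f : H) (i : I),
      C * (w i ^ 2 * ‖(Submodule.orthogonalProjectionOnto (W i) f : H)‖ ^ 2)
        ≤ w i ^ 2 * ∑' j : J i, ⟪(Submodule.orthogonalProjectionOnto (W i) f : H), G i j⟫ ^ 2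
      ∧ w i ^ 2 * ∑' j : J i, ⟪(Submodule.orthogonalProjectionOnto (W i) f : H), G i j⟫ ^ 2
        ≤ D * (w i ^ 2 * ‖(Submodule.orthogonalProjectionOnto (W i) f : H)‖ ^ 2) := by
    intro f i
    obtain ⟨h1, h2⟩ := hframeG i _ (Submodule.orthogonalProjectionOnto (W i) f).2
    have hv2 : (0:ℝ) ≤ w i ^ 2 := sq_nonneg _
    have hn : (0:ℝ) ≤ ‖(Submodule.orthogonalProjectionOnto (W i) f : H)‖ ^ 2 := sq_nonneg _
    have e1 := mul_le_mul_of_nonneg_left h1 hv2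
    have e2 := mul_le_mul_of_nonneg_left h2 hv2
    have e3 := mul_le_mul_of_nonneg_right (hCi i) (mul_nonneg hv2 hn)
    have e4 := mul_le_mul_of_nonneg_right (hDi i) (mul_nonneg hv2 hn)
    constructor <;> nlinarith [e1, e2, e3, e4]
  -- rewriting the frame sums in terms of projections
  have hframeEqV : ∀ (σ : Set I) (f : H),
      (∑' i : σ, ∑' j : J i.1, ⟪f, v i • F i j⟫ ^ 2)
        = ∑' i : σ, v i.1 ^ 2 *
            ∑' j : J i.1, ⟪(Submodule.orthogonalProjectionOnto (V i.1) f : H), F i.1 j⟫ ^ 2 :=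
    fun σ f => tsum_congr fun i => key_eq (V i.1) (v i.1) f (F i.1) (hF i.1)
  have hframeEqW : ∀ (σ : Set I) (f : H),
      (∑' i : σ, ∑' j : J i.1, ⟪f, w i • G i j⟫ ^ 2)
        = ∑' i : σ, w i.1 ^ 2 *
            ∑' j : J i.1, ⟪(Submodule.orthogonalProjectionOnto (W i.1) f : H), G i.1 j⟫ ^ 2 :=
    fun σ f => tsum_congr fun i => key_eq (W i.1) (w i.1) f (G i.1) (hG i.1)
  -- finset versions of fusion sums
  have hfinV : ∀ (s : Finset I) (f : H),
      (∑' i : (↑s : Set I), v i ^ 2 * ‖(Submodule.orthogonalProjectionOnto (V i) f : H)‖ ^ 2)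
        = ∑ i ∈ s, v i ^ 2 * ‖(Submodule.orthogonalProjectionOnto (V i) f : H)‖ ^ 2 :=
    fun s f => by
      exact Finset.tsum_subtype s
        (fun i => v i ^ 2 * ‖(Submodule.orthogonalProjectionOnto (V i) f : H)‖ ^ 2)
  have hfinW : ∀ (s : Finset I) (f : H),
      (∑' i : (↑s : Set I), w i ^ 2 * ‖(Submodule.orthogonalProjectionOnto (W i) f : H)‖ ^ 2)
        = ∑ i ∈ s, w i ^ 2 * ‖(Submodule.orthogonalProjectionOnto (W i) f : H)‖ ^ 2 :=
    fun s f => by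
      exact Finset.tsum_subtype s
        (fun i => w i ^ 2 * ‖(Submodule.orthogonalProjectionOnto (W i) f : H)‖ ^ 2)
  have hfinTV : ∀ (s : Finset I) (f : H),
      (∑' i : (↑s : Set I), v i.1 ^ 2 *
          ∑' j : J i.1, ⟪(Submodule.orthogonalProjectionOnto (V i.1) f : H), F i.1 j⟫ ^ 2)
        = ∑ i ∈ s, v i ^ 2 *
            ∑' j : J i, ⟪(Submodule.orthogonalProjectionOnto (V i) f : H), F i j⟫ ^ 2 :=
    fun s f => by
      exact Finset.tsum_subtype s (fun i => v i ^ 2 *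
        ∑' j : J i, ⟪(Submodule.orthogonalProjectionOnto (V i) f : H), F i j⟫ ^ 2)
  have hfinTW : ∀ (s : Finset I) (f : H),
      (∑' i : (↑s : Set I), w i.1 ^ 2 *
          ∑' j : J i.1, ⟪(Submodule.orthogonalProjectionOnto (W i.1) f : H), G i.1 j⟫ ^ 2)
        = ∑ i ∈ s, w i ^ 2 *
            ∑' j : J i, ⟪(Submodule.orthogonalProjectionOnto (W i) f : H), G i j⟫ ^ 2 :=
    fun s f => by
      exact Finset.tsum_subtype s (fun i => w i ^ 2 *
        ∑' j : J i, ⟪(Submodule.orthogonalProjectionOnto (W i) f : H), G i j⟫ ^ 2)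
  constructor
  · rintro ⟨α, β, hα, hαβ, hmain⟩
    refine ⟨min A C * α, max B D * β, by positivity, ?_, ?_⟩
    · exact mul_le_mul hminmax hαβ hα.le hmaxpos.le
    intro σ f
    -- summability of fusion terms
    have hsumV : Summable (fun i => v i ^ 2 * ‖(Submodule.orthogonalProjectionOnto (V i) f : H)‖ ^ 2) := by
      refine summable_of_sum_le (c := β * ‖f‖ ^ 2) (fun i => by positivity) (fun s => ?_)
      have h := (hmain (↑s : Set I) f).2
      have hnn : (0:ℝ) ≤ ∑' i : (((↑s : Set I))ᶜ : Set I),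
          w i ^ 2 * ‖(Submodule.orthogonalProjectionOnto (W i) f : H)‖ ^ 2 :=
        tsum_nonneg fun i => by positivity
      rw [hfinV s f] at h
      linarith
    have hsumW : Summable (fun i => w i ^ 2 * ‖(Submodule.orthogonalProjectionOnto (W i) f : H)‖ ^ 2) := by
      refine summable_of_sum_le (c := β * ‖f‖ ^ 2) (fun i => by positivity) (fun s => ?_)
      have h := (hmain ((↑s : Set I)ᶜ) f).2
      rw [compl_compl] at h
      have hnn : (0:ℝ) ≤ ∑' i : ((↑s : Set I)ᶜ : Set I),
          v i ^ 2 * ‖(Submodule.orthogonalProjectionOnto (V i) f : H)‖ ^ 2 :=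
        tsum_nonneg fun i => by positivity
      rw [hfinW s f] at h
      linarith
    have hs1 := tsum_sandwich
      (fun i : σ => v i.1 ^ 2 * ‖(Submodule.orthogonalProjectionOnto (V i.1) f : H)‖ ^ 2)
      (fun i : σ => v i.1 ^ 2 *
        ∑' j : J i.1, ⟪(Submodule.orthogonalProjectionOnto (V i.1) f : H), F i.1 j⟫ ^ 2)
      hA (fun i => by positivity) (fun i => (hlemV f i.1).1) (fun i => (hlemV f i.1).2)
      (hsumV.subtype σ)
    have hs2 := tsum_sandwich
      (fun i : (σᶜ : Set I) => w i.1 ^ 2 * ‖(Submodule.orthogonalProjectionOnto (W i.1) f : H)‖ ^ 2)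
      (fun i : (σᶜ : Set I) => w i.1 ^ 2 *
        ∑' j : J i.1, ⟪(Submodule.orthogonalProjectionOnto (W i.1) f : H), G i.1 j⟫ ^ 2)
      hC (fun i => by positivity) (fun i => (hlemW f i.1).1) (fun i => (hlemW f i.1).2)
      (hsumW.subtype σᶜ)
    obtain ⟨lo1, hi1⟩ := hs1
    obtain ⟨lo2, hi2⟩ := hs2
    obtain ⟨hm1, hm2⟩ := hmain σ f
    rw [hframeEqV σ f, hframeEqW σᶜ f]
    set a1 := ∑' i : σ, v i.1 ^ 2 * ‖(Submodule.orthogonalProjectionOnto (V i.1) f : H)‖ ^ 2 with ha1d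
    set a2 := ∑' i : (σᶜ : Set I),
      w i.1 ^ 2 * ‖(Submodule.orthogonalProjectionOnto (W i.1) f : H)‖ ^ 2 with ha2d
    set t1 := ∑' i : σ, v i.1 ^ 2 *
      ∑' j : J i.1, ⟪(Submodule.orthogonalProjectionOnto (V i.1) f : H), F i.1 j⟫ ^ 2 with ht1d
    set t2 := ∑' i : (σᶜ : Set I), w i.1 ^ 2 *
      ∑' j : J i.1, ⟪(Submodule.orthogonalProjectionOnto (W i.1) f : H), G i.1 j⟫ ^ 2 with ht2d
    have ha1 : 0 ≤ a1 := tsum_nonneg fun i => by positivity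
    have ha2 : 0 ≤ a2 := tsum_nonneg fun i => by positivity
    constructor
    · have e1 : min A C * a1 ≤ A * a1 := mul_le_mul_of_nonneg_right (min_le_left A C) ha1
      have e2 : min A C * a2 ≤ C * a2 := mul_le_mul_of_nonneg_right (min_le_right A C) ha2
      have e3 : min A C * (α * ‖f‖ ^ 2) ≤ min A C * (a1 + a2) :=
        mul_le_mul_of_nonneg_left hm1 hminpos.le
      linarith [e1, e2, e3, lo1, lo2]
    · have e1 : B * a1 ≤ max B D * a1 := mul_le_mul_of_nonneg_right (le_max_left B D) ha1
      have e2 : D * a2 ≤ max B D * a2 := mul_le_mul_of_nonneg_right (le_max_right B D) ha2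
      have e3 : max B D * (a1 + a2) ≤ max B D * (β * ‖f‖ ^ 2) :=
        mul_le_mul_of_nonneg_left hm2 hmaxpos.le
      linarith [e1, e2, e3, hi1, hi2]
  · rintro ⟨α, β, hα, hαβ, hmain⟩
    refine ⟨α / max B D, β / min A C, by positivity, ?_, ?_⟩
    · exact div_le_div₀ (hα.le.trans hαβ) hαβ hminpos hminmax
    intro σ f
    -- summability of fusion terms from the weaving-frame bound
    have hsumV : Summable (fun i => v i ^ 2 * ‖(Submodule.orthogonalProjectionOnto (V i) f : H)‖ ^ 2) := by
      refine summable_of_sum_le (c := β * ‖f‖ ^ 2 / A) (fun i => by positivity) (fun s => ?_)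
      have h := (hmain (↑s : Set I) f).2
      rw [hframeEqV (↑s : Set I) f, hfinTV s f] at h
      have hnn : (0:ℝ) ≤ ∑' i : (((↑s : Set I))ᶜ : Set I),
          ∑' j : J i.1, ⟪f, w i • G i j⟫ ^ 2 :=
        tsum_nonneg fun i => tsum_nonneg fun j => sq_nonneg _
      have hsum : ∑ i ∈ s, A * (v i ^ 2 * ‖(Submodule.orthogonalProjectionOnto (V i) f : H)‖ ^ 2)
          ≤ ∑ i ∈ s, v i ^ 2 *
              ∑' j : J i, ⟪(Submodule.orthogonalProjectionOnto (V i) f : H), F i j⟫ ^ 2 :=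
        Finset.sum_le_sum fun i _ => (hlemV f i).1
      rw [le_div_iff₀ hA]
      rw [← Finset.mul_sum] at hsum
      linarith [h, hnn, hsum]
    have hsumW : Summable (fun i => w i ^ 2 * ‖(Submodule.orthogonalProjectionOnto (W i) f : H)‖ ^ 2) := by
      refine summable_of_sum_le (c := β * ‖f‖ ^ 2 / C) (fun i => by positivity) (fun s => ?_)
      have h := (hmain ((↑s : Set I)ᶜ) f).2
      rw [compl_compl] at h
      rw [hframeEqW (↑s : Set I) f, hfinTW s f] at h
      have hnn : (0:ℝ) ≤ ∑' i : ((↑s : Set I)ᶜ : Set I),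
          ∑' j : J i.1, ⟪f, v i • F i j⟫ ^ 2 :=
        tsum_nonneg fun i => tsum_nonneg fun j => sq_nonneg _
      have hsum : ∑ i ∈ s, C * (w i ^ 2 * ‖(Submodule.orthogonalProjectionOnto (W i) f : H)‖ ^ 2)
          ≤ ∑ i ∈ s, w i ^ 2 *
              ∑' j : J i, ⟪(Submodule.orthogonalProjectionOnto (W i) f : H), G i j⟫ ^ 2 :=
        Finset.sum_le_sum fun i _ => (hlemW f i).1
      rw [le_div_iff₀ hC]
      rw [← Finset.mul_sum] at hsum
      linarith [h, hnn, hsum]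
    have hs1 := tsum_sandwich
      (fun i : σ => v i.1 ^ 2 * ‖(Submodule.orthogonalProjectionOnto (V i.1) f : H)‖ ^ 2)
      (fun i : σ => v i.1 ^ 2 *
        ∑' j : J i.1, ⟪(Submodule.orthogonalProjectionOnto (V i.1) f : H), F i.1 j⟫ ^ 2)
      hA (fun i => by positivity) (fun i => (hlemV f i.1).1) (fun i => (hlemV f i.1).2)
      (hsumV.subtype σ)
    have hs2 := tsum_sandwich
      (fun i : (σᶜ : Set I) => w i.1 ^ 2 * ‖(Submodule.orthogonalProjectionOnto (W i.1) f : H)‖ ^ 2)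
      (fun i : (σᶜ : Set I) => w i.1 ^ 2 *
        ∑' j : J i.1, ⟪(Submodule.orthogonalProjectionOnto (W i.1) f : H), G i.1 j⟫ ^ 2)
      hC (fun i => by positivity) (fun i => (hlemW f i.1).1) (fun i => (hlemW f i.1).2)
      (hsumW.subtype σᶜ)
    obtain ⟨lo1, hi1⟩ := hs1
    obtain ⟨lo2, hi2⟩ := hs2
    obtain ⟨hm1, hm2⟩ := hmain σ f
    rw [hframeEqV σ f, hframeEqW σᶜ f] at hm1 hm2
    set a1 := ∑' i : σ, v i.1 ^ 2 * ‖(Submodule.orthogonalProjectionOnto (V i.1) f : H)‖ ^ 2 with ha1d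
    set a2 := ∑' i : (σᶜ : Set I),
      w i.1 ^ 2 * ‖(Submodule.orthogonalProjectionOnto (W i.1) f : H)‖ ^ 2 with ha2d
    set t1 := ∑' i : σ, v i.1 ^ 2 *
      ∑' j : J i.1, ⟪(Submodule.orthogonalProjectionOnto (V i.1) f : H), F i.1 j⟫ ^ 2 with ht1d
    set t2 := ∑' i : (σᶜ : Set I), w i.1 ^ 2 *
      ∑' j : J i.1, ⟪(Submodule.orthogonalProjectionOnto (W i.1) f : H), G i.1 j⟫ ^ 2 with ht2d
    have ha1 : 0 ≤ a1 := tsum_nonneg fun i => by positivity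
    have ha2 : 0 ≤ a2 := tsum_nonneg fun i => by positivity
    constructor
    · have e1 : B * a1 ≤ max B D * a1 := mul_le_mul_of_nonneg_right (le_max_left B D) ha1
      have e2 : D * a2 ≤ max B D * a2 := mul_le_mul_of_nonneg_right (le_max_right B D) ha2
      rw [div_mul_eq_mul_div, div_le_iff₀ hmaxpos]
      linarith [e1, e2, hm1, hi1, hi2]
    · have e1 : min A C * a1 ≤ A * a1 := mul_le_mul_of_nonneg_right (min_le_left A C) ha1
      have e2 : min A C * a2 ≤ C * a2 := mul_le_mul_of_nonneg_right (min_le_right A C) ha2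
      rw [div_mul_eq_mul_div, le_div_iff₀ hminpos]
      linarith [e1, e2, hm2, lo1, lo2]
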